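/- Let R be a commutative G-graded ring with nonzero unity and I a graded ideal of R that is graded radically principal, i.e., Grad(I) = Grad(⟨a⟩) for some homogeneous a ∈ R. Then there exists a homogeneous element c ∈ I such that Grad(I) = Grad(⟨c⟩). -/

import Mathlib

open DirectSum

variable {G A : Type*} [AddGroup G] [DecidableEq G] [CommRing A]

def gradedRadical (𝒜 : G → AddSubgroup A) [GradedRing 𝒜] (I : Ideal A) : Set A :=
  {x | ∀ g : G, ∃ n : ℕ, ((DirectSum.decompose 𝒜 x g : A)) ^ n ∈ I}

def IsGradedRadicallyPrincipal (𝒜 : G → AddSubgroup A) [GradedRing 𝒜] (I : Ideal A) : Prop :=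
  ∃ c : A, SetLike.IsHomogeneousElem 𝒜 c ∧ gradedRadical 𝒜 I = gradedRadical 𝒜 (Ideal.span {c})

def GradedRadicallyPrincipalRing (𝒜 : G → AddSubgroup A) [GradedRing 𝒜] : Prop :=
  ∀ I : Ideal A, I.IsHomogeneous 𝒜 → IsGradedRadicallyPrincipal 𝒜 I

def IsGradedPrime (𝒜 : G → AddSubgroup A) [GradedRing 𝒜] (P : Ideal A) : Prop :=
  P ≠ ⊤ ∧ P.IsHomogeneous 𝒜 ∧
    ∀ ⦃x y : A⦄, SetLike.IsHomogeneousElem 𝒜 x → SetLike.IsHomogeneousElem 𝒜 y → x * y ∈ P →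
      x ∈ P ∨ y ∈ P

theorem stmt_0 (𝒜 : G → AddSubgroup A) [GradedRing 𝒜] (I : Ideal A)
    (hI : I.IsHomogeneous 𝒜) (h : IsGradedRadicallyPrincipal 𝒜 I) :
    ∃ c : A, c ∈ I ∧ SetLike.IsHomogeneousElem 𝒜 c ∧
      gradedRadical 𝒜 I = gradedRadical 𝒜 (Ideal.span {c}) := by
  obtain ⟨a, ⟨g, hg⟩, hrad⟩ := h
  have ha : a ∈ gradedRadical 𝒜 (Ideal.span {a}) := by
    intro g'
    refine ⟨1, ?_⟩
    rw [pow_one]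
    by_cases hgg : g' = g
    · subst hgg
      rw [DirectSum.decompose_of_mem_same 𝒜 hg]
      exact Ideal.mem_span_singleton_self a
    · rw [DirectSum.decompose_of_mem_ne 𝒜 hg (Ne.symm hgg)]
      exact Ideal.zero_mem _
  have ha' : a ∈ gradedRadical 𝒜 I := hrad ▸ ha
  obtain ⟨n, hn⟩ := ha' g
  rw [DirectSum.decompose_of_mem_same 𝒜 hg] at hn
  refine ⟨a ^ (n + 1), ?_, ⟨(n + 1) • g, SetLike.pow_mem_graded _ hg⟩, ?_⟩
  · rw [pow_succ]
    exact I.mul_mem_right _ hn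
  · rw [hrad]
    ext x
    simp only [gradedRadical, Set.mem_setOf_eq]
    constructor
    · intro hx g'
      obtain ⟨k, hk⟩ := hx g'
      rw [Ideal.mem_span_singleton] at hk
      refine ⟨k * (n + 1), ?_⟩
      rw [pow_mul, Ideal.mem_span_singleton]
      exact pow_dvd_pow_of_dvd hk _
    · intro hx g'
      obtain ⟨k, hk⟩ := hx g'
      rw [Ideal.mem_span_singleton] at hk
      exact ⟨k, Ideal.mem_span_singleton.2
        (dvd_trans (dvd_pow_self a (Nat.succ_ne_zero n)) hk)⟩
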